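/- For 0 < k ≤ 1, if in triangle ABC the cevians AA₁ and BB₁ are k-trisectors, meaning ∠BAA₁ = k·∠BAC and ∠ABB₁ = k·∠ABC, and AA₁ = BB₁, then ∠BAC = ∠ABC and the triangle is isosceles (generalized Steiner–Lehmus theorem). -/

import Mathlib

open EuclideanGeometry Real

noncomputable section

/-- The Euclidean plane. -/
abbrev Pt : Type := EuclideanSpace ℝ (Fin 2)

namespace GenSteinerLehmus

private theorem mono_N (k : ℝ) (hk0 : 0 ≤ k) (hk1 : k ≤ 1) :
    MonotoneOn (fun t => k * Real.cos (k*t) * Real.sin t - Real.sin (k*t) * Real.cos t)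
      (Set.Icc 0 (π/2)) := by
  have hd : ∀ t : ℝ, HasDerivAt (fun t => k * Real.cos (k*t) * Real.sin t - Real.sin (k*t) * Real.cos t)
      ((1 - k^2) * (Real.sin (k*t) * Real.sin t)) t := by
    intro t
    have hkt : HasDerivAt (fun t : ℝ => k * t) k t := by
      simpa using (hasDerivAt_id t).const_mul k
    have hc : HasDerivAt (fun t => Real.cos (k*t)) (-Real.sin (k*t) * k) t :=
      (Real.hasDerivAt_cos (k*t)).comp t hkt
    have hs : HasDerivAt (fun t => Real.sin (k*t)) (Real.cos (k*t) * k) t :=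
      (Real.hasDerivAt_sin (k*t)).comp t hkt
    have h1 : HasDerivAt (fun t => k * Real.cos (k*t) * Real.sin t)
        ((k * (-Real.sin (k*t) * k)) * Real.sin t + (k * Real.cos (k*t)) * Real.cos t) t :=
      (hc.const_mul k).mul (Real.hasDerivAt_sin t)
    have h2 : HasDerivAt (fun t => Real.sin (k*t) * Real.cos t)
        ((Real.cos (k*t) * k) * Real.cos t + Real.sin (k*t) * (-Real.sin t)) t :=
      hs.mul (Real.hasDerivAt_cos t)
    exact (h1.sub h2).congr_deriv (by ring)
  apply monotoneOn_of_deriv_nonneg (convex_Icc _ _)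
  · exact (Continuous.continuousOn (by continuity))
  · exact fun x _ => (hd x).differentiableAt.differentiableWithinAt
  · intro x hx
    rw [interior_Icc] at hx
    rw [(hd x).deriv]
    have hkx0 : 0 ≤ k * x := mul_nonneg hk0 hx.1.le
    have hkx : k * x ≤ π := by nlinarith [hx.2, pi_pos]
    have := Real.sin_nonneg_of_nonneg_of_le_pi hkx0 hkx
    have := Real.sin_nonneg_of_nonneg_of_le_pi hx.1.le (by nlinarith [pi_pos, hx.2])
    have hk2 : k^2 ≤ 1 := by nlinarith
    have := mul_nonneg ‹0 ≤ Real.sin (k*x)› ‹0 ≤ Real.sin x›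
    nlinarith

private theorem N_nonneg (k : ℝ) (hk0 : 0 ≤ k) (hk1 : k ≤ 1) {t : ℝ} (ht0 : 0 ≤ t) (ht : t ≤ π/2) :
    Real.sin (k*t) * Real.cos t ≤ k * Real.cos (k*t) * Real.sin t := by
  have h := mono_N k hk0 hk1 (Set.left_mem_Icc.2 (by positivity)) (Set.mem_Icc.2 ⟨ht0, ht⟩) ht0
  simp at h
  linarith

private theorem ratio_le (k : ℝ) (hk0 : 0 ≤ k) (hk1 : k ≤ 1) {d s : ℝ} (hd : 0 < d) (hds : d ≤ s)
    (hs : s ≤ π/2) : Real.sin (k*d) * Real.sin s ≤ Real.sin (k*s) * Real.sin d := by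
  have hsinpos : ∀ t : ℝ, t ∈ Set.Icc d s → 0 < Real.sin t := fun t htm =>
    Real.sin_pos_of_pos_of_lt_pi (lt_of_lt_of_le hd htm.1)
      (lt_of_le_of_lt htm.2 (by linarith [pi_pos]))
  have hmono : MonotoneOn (fun t => Real.sin (k*t) / Real.sin t) (Set.Icc d s) := by
    have hder : ∀ t ∈ Set.Icc d s, HasDerivAt (fun t => Real.sin (k*t) / Real.sin t)
        ((k * Real.cos (k*t) * Real.sin t - Real.sin (k*t) * Real.cos t) / (Real.sin t)^2) t := by
      intro t htm
      have hkt : HasDerivAt (fun t : ℝ => k * t) k t := by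
        simpa using (hasDerivAt_id t).const_mul k
      have hsn : HasDerivAt (fun t => Real.sin (k*t)) (Real.cos (k*t) * k) t :=
        (Real.hasDerivAt_sin (k*t)).comp t hkt
      have := hsn.div (Real.hasDerivAt_sin t) (ne_of_gt (hsinpos t htm))
      exact this.congr_deriv (by ring)
    apply monotoneOn_of_deriv_nonneg (convex_Icc _ _)
    · intro t htm
      exact ((hder t htm).continuousAt).continuousWithinAt
    · intro t htm
      rw [interior_Icc] at htm
      exact (hder t ⟨htm.1.le, htm.2.le⟩).differentiableAt.differentiableWithinAt
    · intro t htm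
      rw [interior_Icc] at htm
      have htm' : t ∈ Set.Icc d s := ⟨htm.1.le, htm.2.le⟩
      rw [(hder t htm').deriv]
      apply div_nonneg _ (sq_nonneg _)
      have := N_nonneg k hk0 hk1 (le_trans hd.le htm'.1) (le_trans htm'.2 hs)
      linarith
  have h := hmono (Set.mem_Icc.2 ⟨le_refl d, hds⟩) (Set.mem_Icc.2 ⟨hds, le_refl s⟩) hds
  have hd' := hsinpos d ⟨le_refl d, hds⟩
  have hs' := hsinpos s ⟨hds, le_refl s⟩
  rw [div_le_div_iff₀ hd' hs'] at h
  linarith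

private theorem trig_ident (s d x y : ℝ) :
    Real.sin (s+d) * Real.sin ((x+y)+(s-d)) - Real.sin (s-d) * Real.sin ((x-y)+(s+d)) =
      2 * (Real.sin d * Real.sin x * Real.cos (d-y) + Real.sin s * Real.sin y * Real.cos (s+x)) := by
  simp only [Real.sin_add, Real.cos_add, Real.sin_sub, Real.cos_sub]
  linear_combination (2*Real.sin s*Real.cos s*Real.cos x*Real.sin y
      - 2*(Real.sin s)^2*Real.sin x*Real.sin y) * Real.sin_sq_add_cos_sq d +
    (2*Real.cos d*Real.sin d*Real.sin x*Real.cos y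
      + 2*(Real.sin d)^2*Real.sin x*Real.sin y) * Real.sin_sq_add_cos_sq s

private lemma ai_perm₁₂ {a b c : Pt} (h : AffineIndependent ℝ ![a, b, c]) :
    AffineIndependent ℝ ![b, a, c] := by
  rw [affineIndependent_iff_not_collinear_set] at h ⊢
  rwa [Set.insert_comm]

private lemma ai_perm₂₃ {a b c : Pt} (h : AffineIndependent ℝ ![a, b, c]) :
    AffineIndependent ℝ ![a, c, b] := by
  rw [affineIndependent_iff_not_collinear_set] at h ⊢
  rwa [Set.pair_comm c b]

set_option maxHeartbeats 1000000 in
private theorem key_sd (k s d : ℝ) (hk0 : 0 < k) (hk1 : k ≤ 1) (hd0 : 0 < d) (hds : d < s)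
    (hs2 : s < π/2) :
    Real.sin (s-d) * Real.sin (k*(s-d) + (s+d)) < Real.sin (s+d) * Real.sin (k*(s+d) + (s-d)) := by
  have hπ := pi_pos
  have e1 : k*(s+d) + (s-d) = (k*s+k*d) + (s-d) := by ring
  have e2 : k*(s-d) + (s+d) = (k*s-k*d) + (s+d) := by ring
  rw [e1, e2, ← sub_pos, trig_ident s d (k*s) (k*d)]
  have hx0 : 0 < k*s := mul_pos hk0 (by linarith)
  have hxs : k*s ≤ s := by nlinarith
  have hy0 : 0 < k*d := mul_pos hk0 hd0
  have hyd : k*d ≤ d := by nlinarith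
  have hsd : 0 < Real.sin d := Real.sin_pos_of_pos_of_lt_pi hd0 (by linarith)
  have hss : 0 < Real.sin s := Real.sin_pos_of_pos_of_lt_pi (by linarith) (by linarith)
  have hsx : 0 < Real.sin (k*s) := Real.sin_pos_of_pos_of_lt_pi hx0 (by linarith)
  have hsy : 0 < Real.sin (k*d) := Real.sin_pos_of_pos_of_lt_pi hy0 (by linarith)
  have hc1 : 0 < Real.cos (d - k*d) := Real.cos_pos_of_mem_Ioo ⟨by linarith, by linarith⟩
  have hR : Real.sin (k*d) * Real.sin s ≤ Real.sin (k*s) * Real.sin d :=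
    ratio_le k hk0.le hk1 hd0 hds.le hs2.le
  rcases le_or_gt 0 (Real.cos (s + k*s)) with hc2 | hc2
  · have h1 : 0 < Real.sin d * Real.sin (k*s) * Real.cos (d-k*d) := by positivity
    nlinarith [mul_nonneg (mul_nonneg hss.le hsy.le) hc2]
  · have hks : k * (s - d) ≤ s - d := by nlinarith
    have hkp : k * (s + d) ≤ s + d := by nlinarith
    have hsum : 0 < Real.cos (d - k*d) + Real.cos (s + k*s) := by
      rw [Real.cos_add_cos]
      have h1 : 0 < Real.cos ((d - k*d + (s + k*s)) / 2) :=
        Real.cos_pos_of_mem_Ioo ⟨by nlinarith, by nlinarith⟩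
      have h2 : 0 < Real.cos ((d - k*d - (s + k*s)) / 2) :=
        Real.cos_pos_of_mem_Ioo ⟨by nlinarith, by nlinarith⟩
      positivity
    have hT2 : Real.sin d * Real.sin (k*s) * Real.cos (s+k*s) ≤
        Real.sin s * Real.sin (k*d) * Real.cos (s+k*s) := by
      have := mul_le_mul_of_nonpos_right hR hc2.le
      linarith [this]
    nlinarith [mul_pos (mul_pos hsd hsx) hsum]

private theorem key_lt (k α β : ℝ) (hk0 : 0 < k) (hk1 : k ≤ 1) (hβ : 0 < β) (hβα : β < α)
    (hαβ : α + β < π) :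
    Real.sin β * Real.sin (k*β + α) < Real.sin α * Real.sin (k*α + β) := by
  have h := key_sd k ((α+β)/2) ((α-β)/2) hk0 hk1 (by linarith) (by linarith) (by linarith)
  have a3 : k*((α+β)/2-(α-β)/2) + ((α+β)/2+(α-β)/2) = k*β+α := by ring
  have a4 : k*((α+β)/2+(α-β)/2) + ((α+β)/2-(α-β)/2) = k*α+β := by ring
  have a1 : (α+β)/2 - (α-β)/2 = β := by ring
  have a2 : (α+β)/2 + (α-β)/2 = α := by ring
  rw [a3, a4, a1, a2] at h
  exact h

variable [Fact (Module.finrank ℝ (EuclideanSpace ℝ (Fin 2)) = 2)]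
  [Module.Oriented ℝ (EuclideanSpace ℝ (Fin 2)) (Fin 2)]

private theorem cevian_len (A B C A₁ : Pt) (k : ℝ)
    (hABC : AffineIndependent ℝ ![A, B, C])
    (hA₁ : A₁ ∈ affineSpan ℝ ({B, C} : Set Pt)) (hA₁B : A₁ ≠ B)
    (htriA : ∡ B A A₁ = ((k * (∡ B A C).toReal : ℝ) : Real.Angle)) :
    dist A A₁ * |Real.sin (k * (∡ B A C).toReal - (∡ A B C).toReal)| =
      dist A B * |Real.sin ((∡ A B C).toReal)| := by
  have hncol : ¬ Collinear ℝ ({A, B, C} : Set Pt) :=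
    affineIndependent_iff_not_collinear_set.1 hABC
  have hBA : B ≠ A := (hABC.injective.ne (by decide : (1 : Fin 3) ≠ 0))
  have hCB : C ≠ B := (hABC.injective.ne (by decide : (2 : Fin 3) ≠ 1))
  have hcolA₁ : Collinear ℝ ({A₁, B, C} : Set Pt) := collinear_insert_of_mem_affineSpan_pair hA₁
  have hA₁A : A₁ ≠ A := by
    intro h
    rw [h] at hA₁
    exact hncol (collinear_insert_of_mem_affineSpan_pair hA₁)
  have hABA₁ : AffineIndependent ℝ ![A, B, A₁] := by
    rw [affineIndependent_iff_not_collinear_set]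
    intro hc
    have hA : A ∈ line[ℝ, B, A₁] :=
      hc.mem_affineSpan_of_mem_of_ne (by simp) (by simp) (by simp) hA₁B.symm
    have hC : C ∈ line[ℝ, B, A₁] :=
      hcolA₁.mem_affineSpan_of_mem_of_ne (by simp) (by simp) (by simp) hA₁B.symm
    refine hncol ((collinear_insert_insert_of_mem_affineSpan_pair hA hC).subset ?_)
    intro x hx
    simp only [Set.mem_insert_iff, Set.mem_singleton_iff] at hx ⊢
    tauto
  -- angle at B
  have h2 : (2:ℤ) • ∡ A B A₁ = (2:ℤ) • ∡ A B C :=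
    Collinear.two_zsmul_oangle_eq_right hcolA₁ hA₁B hCB
  have habs1 : |Real.Angle.sin (∡ A B A₁)| = |Real.sin ((∡ A B C).toReal)| := by
    rw [Real.Angle.abs_sin_eq_of_two_zsmul_eq h2, Real.Angle.sin_toReal]
  -- angle at A₁
  have hsum : ∡ A B A₁ + ∡ B A₁ A + ∡ A₁ A B = π :=
    EuclideanGeometry.oangle_add_oangle_add_oangle_eq_pi hBA hA₁B hA₁A.symm
  have hrev : ∡ A₁ A B = -((k * (∡ B A C).toReal : ℝ) : Real.Angle) := by
    rw [oangle_rev B A A₁, htriA]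
  have h3 : (2:ℤ) • ∡ B A₁ A =
      (2:ℤ) • (((k * (∡ B A C).toReal - (∡ A B C).toReal : ℝ)) : Real.Angle) := by
    have e : ∡ B A₁ A = ↑π - ∡ A B A₁ - ∡ A₁ A B := by
      rw [← hsum]; abel
    rw [e, hrev, smul_sub, smul_sub, Real.Angle.two_zsmul_coe_pi, h2]
    rw [show ((k * (∡ B A C).toReal - (∡ A B C).toReal : ℝ) : Real.Angle)
        = ((k * (∡ B A C).toReal : ℝ) : Real.Angle) - ((∡ A B C).toReal : Real.Angle) from by
      rw [sub_eq_add_neg, sub_eq_add_neg, Real.Angle.coe_add, Real.Angle.coe_neg]]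
    rw [Real.Angle.coe_toReal]
    rw [smul_sub, smul_neg]
    abel
  have habs2 : |Real.Angle.sin (∡ A A₁ B)| =
      |Real.sin (k * (∡ B A C).toReal - (∡ A B C).toReal)| := by
    rw [oangle_rev B A₁ A, Real.Angle.sin_neg, abs_neg,
      Real.Angle.abs_sin_eq_of_two_zsmul_eq h3, Real.Angle.sin_coe]
  -- law of sines
  let t : Affine.Triangle ℝ Pt := ⟨![A, B, A₁], hABA₁⟩
  have k1 := t.dist_div_sin_oangle_eq_two_mul_circumradius
    (i₁ := 0) (i₂ := 1) (i₃ := 2) (by decide) (by decide) (by decide)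
  have k2 := t.dist_div_sin_oangle_eq_two_mul_circumradius
    (i₁ := 0) (i₂ := 2) (i₃ := 1) (by decide) (by decide) (by decide)
  simp only [t, Affine.Simplex.points, Matrix.cons_val_zero, Matrix.cons_val_one,
    Matrix.head_cons, Matrix.cons_val_two, Matrix.tail_cons] at k1 k2
  rw [habs1] at k1
  rw [habs2] at k2
  -- nonvanishing of sines
  have hne1 : |Real.sin ((∡ A B C).toReal)| ≠ 0 := by
    rw [Real.Angle.sin_toReal, abs_ne_zero]
    rw [Real.Angle.sin_ne_zero_iff]
    exact oangle_ne_zero_and_ne_pi_iff_affineIndependent.2 hABC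
  have hne2 : |Real.sin (k * (∡ B A C).toReal - (∡ A B C).toReal)| ≠ 0 := by
    rw [← habs2, abs_ne_zero, Real.Angle.sin_ne_zero_iff]
    exact oangle_ne_zero_and_ne_pi_iff_affineIndependent.2 (ai_perm₂₃ hABA₁)
  rw [← k2] at k1
  exact (div_eq_div_iff hne1 hne2).1 k1

private theorem main_aux (A B C A₁ B₁ : Pt) (k : ℝ) (hk0 : 0 < k) (hk1 : k ≤ 1)
    (hABC : AffineIndependent ℝ ![A, B, C])
    (hA₁ : A₁ ∈ affineSpan ℝ ({B, C} : Set Pt)) (hA₁B : A₁ ≠ B)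
    (hB₁ : B₁ ∈ affineSpan ℝ ({A, C} : Set Pt)) (hB₁A : B₁ ≠ A)
    (htriA : ∡ B A A₁ = ((k * (∡ B A C).toReal : ℝ) : Real.Angle))
    (htriB : ∡ A B B₁ = ((k * (∡ A B C).toReal : ℝ) : Real.Angle))
    (hlen : dist A A₁ = dist B B₁)
    (hpos : 0 < (∡ B A C).toReal) :
    ∠ B A C = ∠ A B C ∧ dist A C = dist B C := by
  have hπ := pi_pos
  have hncol : ¬ Collinear ℝ ({A, B, C} : Set Pt) :=
    affineIndependent_iff_not_collinear_set.1 hABC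
  have hBA : B ≠ A := (hABC.injective.ne (by decide : (1 : Fin 3) ≠ 0))
  have hCB : C ≠ B := (hABC.injective.ne (by decide : (2 : Fin 3) ≠ 1))
  have hCA : C ≠ A := (hABC.injective.ne (by decide : (2 : Fin 3) ≠ 0))
  have hBAC : AffineIndependent ℝ ![B, A, C] := ai_perm₁₂ hABC
  have hApair := oangle_ne_zero_and_ne_pi_iff_affineIndependent.2 hBAC
  have hBpair := oangle_ne_zero_and_ne_pi_iff_affineIndependent.2 hABC
  -- signs
  have hsignB : (∡ A B C).sign = - (∡ B A C).sign := by
    rw [oangle_rotate_sign C A B, oangle_rev B A C, Real.Angle.sign_neg]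
  have hsignApos : (∡ B A C).sign = 1 := by
    have h1 : 0 ≤ (∡ B A C).sign := Real.Angle.toReal_nonneg_iff_sign_nonneg.1 hpos.le
    have h2 : (∡ B A C).sign ≠ 0 := Real.Angle.sign_ne_zero_iff.2 hApair
    rcases h1.lt_or_eq with h | h
    · exact (SignType.pos_iff.1 h)
    · exact absurd h.symm h2
  have hθBneg : (∡ A B C).toReal < 0 := by
    rw [Real.Angle.toReal_neg_iff_sign_neg, hsignB, hsignApos]
  -- cevian lengths (before abstracting the angles)
  have E1 := cevian_len A B C A₁ k hABC hA₁ hA₁B htriA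
  have E2 := cevian_len B A C B₁ k hBAC hB₁ hB₁A htriB
  -- abstract the two angle values
  obtain ⟨α, hα⟩ : ∃ a, a = (∡ B A C).toReal := ⟨_, rfl⟩
  obtain ⟨β, hβd⟩ : ∃ b, b = -(∡ A B C).toReal := ⟨_, rfl⟩
  have hθB : (∡ A B C).toReal = -β := by rw [hβd]; ring
  rw [← hα] at hpos
  have hβpos : 0 < β := by rw [hβd]; linarith
  have hαpi : α < π := by
    rcases lt_or_eq_of_le (Real.Angle.toReal_le_pi (∡ B A C)) with h | h
    · rw [hα]; exact h
    · exact absurd (Real.Angle.toReal_eq_pi_iff.1 h) hApair.2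
  have hβpi : β < π := by
    have := Real.Angle.neg_pi_lt_toReal (∡ A B C)
    rw [hβd]; linarith
  -- unoriented angles
  have hangA : ∠ B A C = α := by
    rw [angle_eq_abs_oangle_toReal hBA hCA, ← hα, abs_of_pos hpos]
  have hangB : ∠ A B C = β := by
    rw [angle_eq_abs_oangle_toReal hBA.symm hCB, hθB, abs_neg, abs_of_pos hβpos]
  -- angle sum
  have hsum : ∠ C A B + ∠ A B C + ∠ B C A = π :=
    angle_add_angle_add_angle_eq_pi B hCA.symm
  have hACB : AffineIndependent ℝ ![A, C, B] := ai_perm₂₃ hABC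
  have hγpos : 0 < ∠ B C A := by
    have hpair := oangle_ne_zero_and_ne_pi_iff_affineIndependent.2 (ai_perm₂₃ (ai_perm₁₂ hABC))
    rw [angle_eq_abs_oangle_toReal hCB.symm hCA.symm, abs_pos]
    intro h
    exact hpair.1 (by rwa [← Real.Angle.toReal_eq_zero_iff])
  have hαβ : α + β < π := by
    rw [angle_comm C A B, hangA, hangB] at hsum
    linarith
  rw [← hα, hθB] at E1 E2
  have hkαβ : 0 < k*α + β := by positivity
  have hkα : k*α ≤ α := mul_le_of_le_one_left hpos.le hk1
  have hkβ : k*β ≤ β := mul_le_of_le_one_left hβpos.le hk1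
  have hkαβ2 : k*α + β < π := by linarith
  have hkβα : 0 < k*β + α := by positivity
  have hkβα2 : k*β + α < π := by linarith
  have habs1 : |Real.sin (k * α - -β)| = Real.sin (k*α + β) := by
    rw [show k*α - -β = k*α + β by ring, abs_of_pos (Real.sin_pos_of_pos_of_lt_pi hkαβ hkαβ2)]
  have habs2 : |Real.sin (-β)| = Real.sin β := by
    rw [Real.sin_neg, abs_neg, abs_of_pos (Real.sin_pos_of_pos_of_lt_pi hβpos hβpi)]
  have habs3 : |Real.sin (k * -β - α)| = Real.sin (k*β + α) := by
    rw [show k * -β - α = -(k*β + α) by ring, Real.sin_neg, abs_neg,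
      abs_of_pos (Real.sin_pos_of_pos_of_lt_pi hkβα hkβα2)]
  have habs4 : |Real.sin α| = Real.sin α :=
    abs_of_pos (Real.sin_pos_of_pos_of_lt_pi hpos hαpi)
  rw [habs1, habs2] at E1
  rw [habs3, habs4, dist_comm B A] at E2
  -- combine
  have hL : 0 < dist A A₁ := by
    rw [dist_pos]
    intro h
    rw [← h] at hA₁
    exact hncol (collinear_insert_of_mem_affineSpan_pair hA₁)
  have hmain : Real.sin α * Real.sin (k*α + β) = Real.sin β * Real.sin (k*β + α) := by
    have e1 : dist A A₁ * (Real.sin (k*α+β) * Real.sin α) = dist A B * Real.sin β * Real.sin α := by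
      rw [← mul_assoc, E1]
    have e2 : dist A A₁ * (Real.sin (k*β+α) * Real.sin β) = dist A B * Real.sin α * Real.sin β := by
      rw [← mul_assoc, hlen, E2]
    have e3 : dist A A₁ * (Real.sin (k*α+β) * Real.sin α) =
        dist A A₁ * (Real.sin (k*β+α) * Real.sin β) := by
      rw [e1, e2]; ring
    have := mul_left_cancel₀ (ne_of_gt hL) e3
    linarith [this]
  -- trichotomy
  have hαβeq : α = β := by
    rcases lt_trichotomy α β with h | h | h
    · have := key_lt k β α hk0 hk1 hpos h (by linarith)
      linarith [this]
    · exact h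
    · have := key_lt k α β hk0 hk1 hβpos h hαβ
      linarith [this]
  constructor
  · rw [hangA, hangB, hαβeq]
  · have h1 : ∠ C A B = ∠ C B A := by
      rw [angle_comm C A B, angle_comm C B A, hangA, hangB, hαβeq]
    have h2 : ∠ A C B ≠ π := by
      have hpair := oangle_ne_zero_and_ne_pi_iff_affineIndependent.2 hACB
      rw [angle_eq_abs_oangle_toReal hCA.symm hCB.symm]
      intro h
      have h3 := Real.Angle.neg_pi_lt_toReal (∡ A C B)
      have h4 : (∡ A C B).toReal = π := by
        rcases (abs_eq (le_of_lt hπ)).1 h with h5 | h5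
        · exact h5
        · linarith
      exact hpair.2 (by rwa [← Real.Angle.toReal_eq_pi_iff])
    have h5 := dist_eq_of_angle_eq_angle_of_angle_ne_pi h1 h2
    rw [dist_comm C A, dist_comm C B] at h5
    exact h5

end GenSteinerLehmus

open GenSteinerLehmus in
/-- Generalized Steiner–Lehmus theorem: if the cevians `AA₁`, `BB₁` are `k`-trisectors
(`∡BAA₁ = k·∡BAC`, `∡ABB₁ = k·∡ABC` as oriented angles) with `0 < k ≤ 1` and
`AA₁ = BB₁`, then `∠BAC = ∠ABC` and the triangle is isosceles. -/
theorem generalized_steiner_lehmus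
    [Fact (Module.finrank ℝ (EuclideanSpace ℝ (Fin 2)) = 2)]
    [Module.Oriented ℝ (EuclideanSpace ℝ (Fin 2)) (Fin 2)]
    (A B C A₁ B₁ : Pt) (k : ℝ) (hk0 : 0 < k) (hk1 : k ≤ 1)
    (hABC : AffineIndependent ℝ ![A, B, C])
    (hA₁ : A₁ ∈ affineSpan ℝ ({B, C} : Set Pt)) (hA₁B : A₁ ≠ B) (hA₁C : A₁ ≠ C)
    (hB₁ : B₁ ∈ affineSpan ℝ ({A, C} : Set Pt)) (hB₁A : B₁ ≠ A) (hB₁C : B₁ ≠ C)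
    (htriA : ∡ B A A₁ = ((k * (∡ B A C).toReal : ℝ) : Real.Angle))
    (htriB : ∡ A B B₁ = ((k * (∡ A B C).toReal : ℝ) : Real.Angle))
    (hlen : dist A A₁ = dist B B₁) :
    ∠ B A C = ∠ A B C ∧ dist A C = dist B C := by
  have hBAC : AffineIndependent ℝ ![B, A, C] := ai_perm₁₂ hABC
  have hApair := oangle_ne_zero_and_ne_pi_iff_affineIndependent.2 hBAC
  have hBpair := oangle_ne_zero_and_ne_pi_iff_affineIndependent.2 hABC
  have hsignB : (∡ A B C).sign = - (∡ B A C).sign := by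
    rw [oangle_rotate_sign C A B, oangle_rev B A C, Real.Angle.sign_neg]
  have hA0 : (∡ B A C).toReal ≠ 0 := fun h => hApair.1 (Real.Angle.toReal_eq_zero_iff.1 h)
  rcases lt_or_gt_of_ne hA0 with hneg | hpos
  · -- ∡ B A C negative: apply the auxiliary lemma with A and B swapped
    have hsignAneg : (∡ B A C).sign = -1 := Real.Angle.toReal_neg_iff_sign_neg.1 hneg
    have hBposs : 0 < (∡ A B C).toReal := by
      have h1 : (∡ A B C).sign = 1 := by rw [hsignB, hsignAneg]; rfl
      have h2 : 0 ≤ (∡ A B C).toReal := by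
        rw [Real.Angle.toReal_nonneg_iff_sign_nonneg, h1]
        decide
      rcases h2.lt_or_eq with h | h
      · exact h
      · exact absurd (Real.Angle.toReal_eq_zero_iff.1 h.symm)  hBpair.1
    obtain ⟨h1, h2⟩ := main_aux B A C B₁ A₁ k hk0 hk1 hBAC hB₁ hB₁A hA₁ hA₁B
      htriB htriA hlen.symm hBposs
    exact ⟨h1.symm, h2.symm⟩
  · exact main_aux A B C A₁ B₁ k hk0 hk1 hABC hA₁ hA₁B hB₁ hB₁A htriA htriB hlen hpos
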